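/- Suppose α R² ≥ ln 2, i.e. exp(-α R²) ≤ 1/2. Then for every 0 < c < 1 and every r ≥ 0, f(r) ≤ exp(-(c/4)·exp(-α R²)) · f((1+c)r), where f(r) = ∫₀^r ψ(s)g(s) ds. -/

import Mathlib

open Real MeasureTheory intervalIntegral

/-- The auxiliary function ψ(r) = exp(-α·min{r², R²}). -/
noncomputable def psiE (α R r : ℝ) : ℝ := Real.exp (-(α * min (r ^ 2) (R ^ 2)))

/-- Ψ(r) = ∫₀ʳ ψ(s) ds. -/
noncomputable def PsiE (α R r : ℝ) : ℝ := ∫ s in (0:ℝ)..r, psiE α R s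

/-- g(r) = 1 - (1/2)·(∫₀^{min{r,R}} Ψ/ψ)/(∫₀^R Ψ/ψ). -/
noncomputable def gEb (α R r : ℝ) : ℝ :=
  1 - (1 / 2) * (∫ s in (0:ℝ)..(min r R), PsiE α R s / psiE α R s) /
      (∫ s in (0:ℝ)..R, PsiE α R s / psiE α R s)

/-- The Eberle distance function f(r) = ∫₀ʳ ψ(s)·g(s) ds. -/
noncomputable def fEb (α R r : ℝ) : ℝ := ∫ s in (0:ℝ)..r, psiE α R s * gEb α R s

section Aux

variable (α R : ℝ) (hα : 0 < α) (hR : 0 < R)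

lemma psiE_cont : Continuous (psiE α R) := by
  unfold psiE; fun_prop

lemma psiE_pos (r : ℝ) : 0 < psiE α R r := Real.exp_pos _

lemma psiE_le_one (r : ℝ) (hα : 0 ≤ α) : psiE α R r ≤ 1 := by
  unfold psiE
  rw [Real.exp_le_one_iff, neg_nonpos]
  have : (0:ℝ) ≤ min (r ^ 2) (R ^ 2) := le_min (sq_nonneg _) (sq_nonneg _)
  positivity

lemma psiE_ge (r : ℝ) (hα : 0 ≤ α) : Real.exp (-(α * R ^ 2)) ≤ psiE α R r := by
  unfold psiE
  apply Real.exp_le_exp.2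
  have : min (r ^ 2) (R ^ 2) ≤ R ^ 2 := min_le_right _ _
  nlinarith

lemma psiE_intInt (a b : ℝ) : IntervalIntegrable (psiE α R) volume a b :=
  (psiE_cont α R).intervalIntegrable a b

lemma PsiE_cont : Continuous (PsiE α R) :=
  intervalIntegral.continuous_primitive (psiE_intInt α R) 0

lemma Q_cont : Continuous (fun s => PsiE α R s / psiE α R s) :=
  (PsiE_cont α R).div (psiE_cont α R) (fun x => (psiE_pos α R x).ne')

lemma Q_intInt (a b : ℝ) : IntervalIntegrable (fun s => PsiE α R s / psiE α R s) volume a b :=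
  (Q_cont α R).intervalIntegrable a b

lemma PsiE_nonneg (r : ℝ) (hr : 0 ≤ r) : 0 ≤ PsiE α R r := by
  unfold PsiE
  exact intervalIntegral.integral_nonneg hr (fun x _ => (psiE_pos α R x).le)

lemma PsiE_pos (r : ℝ) (hr : 0 < r) : 0 < PsiE α R r := by
  unfold PsiE
  exact intervalIntegral.intervalIntegral_pos_of_pos_on (psiE_intInt α R 0 r)
    (fun x _ => psiE_pos α R x) hr

lemma Q_nonneg (s : ℝ) (hs : 0 ≤ s) : 0 ≤ PsiE α R s / psiE α R s :=
  div_nonneg (PsiE_nonneg α R s hs) (psiE_pos α R s).le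

lemma D_pos (hR : 0 < R) : 0 < ∫ s in (0:ℝ)..R, PsiE α R s / psiE α R s := by
  apply intervalIntegral.intervalIntegral_pos_of_pos_on (Q_intInt α R 0 R) _ hR
  intro x hx
  exact div_pos (PsiE_pos α R x hx.1) (psiE_pos α R x)

lemma gEb_le_one (hR : 0 < R) (s : ℝ) (hs : 0 ≤ s) : gEb α R s ≤ 1 := by
  unfold gEb
  have hD := D_pos α R hR
  have hN : 0 ≤ ∫ t in (0:ℝ)..(min s R), PsiE α R t / psiE α R t :=
    intervalIntegral.integral_nonneg (le_min hs hR.le)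
      (fun x hx => Q_nonneg α R x hx.1)
  have : 0 ≤ (1 / 2) * (∫ t in (0:ℝ)..(min s R), PsiE α R t / psiE α R t) /
      (∫ t in (0:ℝ)..R, PsiE α R t / psiE α R t) := by positivity
  linarith

lemma gEb_ge_half (hR : 0 < R) (s : ℝ) (hs : 0 ≤ s) : 1 / 2 ≤ gEb α R s := by
  unfold gEb
  have hD := D_pos α R hR
  have hm : min s R ≤ R := min_le_right _ _
  have hN0 : 0 ≤ min s R := le_min hs hR.le
  have hle : (∫ t in (0:ℝ)..(min s R), PsiE α R t / psiE α R t) ≤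
      ∫ t in (0:ℝ)..R, PsiE α R t / psiE α R t := by
    have hsplit := intervalIntegral.integral_add_adjacent_intervals
      (Q_intInt α R 0 (min s R)) (Q_intInt α R (min s R) R)
    have htail : 0 ≤ ∫ t in (min s R)..R, PsiE α R t / psiE α R t :=
      intervalIntegral.integral_nonneg hm (fun x hx => Q_nonneg α R x (hN0.trans hx.1))
    linarith
  have : (1 / 2) * (∫ t in (0:ℝ)..(min s R), PsiE α R t / psiE α R t) /
      (∫ t in (0:ℝ)..R, PsiE α R t / psiE α R t) ≤ 1 / 2 := by
    rw [div_le_iff₀ hD]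
    nlinarith
  linarith

lemma gEb_cont (hR : 0 < R) : Continuous (gEb α R) := by
  unfold gEb
  have hD := (D_pos α R hR).ne'
  have : Continuous fun r => ∫ s in (0:ℝ)..(min r R), PsiE α R s / psiE α R s :=
    (intervalIntegral.continuous_primitive (Q_intInt α R) 0).comp
      (continuous_id.min continuous_const)
  fun_prop

lemma integrand_intInt (hR : 0 < R) (a b : ℝ) :
    IntervalIntegrable (fun s => psiE α R s * gEb α R s) volume a b :=
  ((psiE_cont α R).mul (gEb_cont α R hR)).intervalIntegrable a b

end Aux

/-- If exp(-αR²) ≤ 1/2 then f(r) ≤ exp(-(c/4)·exp(-αR²))·f((1+c)r) for 0 < c < 1, r ≥ 0. -/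
theorem f_multiplicative_contraction (α R : ℝ) (hα : 0 < α) (hR : 0 < R)
    (hsmall : Real.exp (-(α * R ^ 2)) ≤ 1 / 2) :
    ∀ c : ℝ, 0 < c → c < 1 → ∀ r : ℝ, 0 ≤ r →
      fEb α R r ≤ Real.exp (-(c / 4) * Real.exp (-(α * R ^ 2))) * fEb α R ((1 + c) * r) := by
  intro c hc hc1 r hr
  set E := Real.exp (-(α * R ^ 2)) with hE
  have hE0 : 0 < E := Real.exp_pos _
  -- bounds on integrand
  have hub : ∀ s ∈ Set.Icc (0:ℝ) r, psiE α R s * gEb α R s ≤ 1 := by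
    intro s hs
    have h1 := psiE_le_one α R s hα.le
    have h2 := gEb_le_one α R hR s hs.1
    have h3 := (psiE_pos α R s).le
    have h4 := gEb_ge_half α R hR s hs.1
    nlinarith
  have hlbfun : ∀ s, 0 ≤ s → E / 2 ≤ psiE α R s * gEb α R s := by
    intro s hs
    have h1 := psiE_ge α R s hα.le
    have h4 := gEb_ge_half α R hR s hs
    nlinarith [psiE_pos α R s]
  -- f(r) ≤ r
  have hA_le : fEb α R r ≤ r := by
    have := intervalIntegral.integral_mono_on hr (integrand_intInt α R hR 0 r)
      (intervalIntegrable_const) hub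
    simpa [fEb] using this
  have hA_nonneg : 0 ≤ fEb α R r :=
    intervalIntegral.integral_nonneg hr (fun s hs => le_trans (by positivity) (hlbfun s hs.1))
  -- f((1+c)r) - f(r) = ∫_r^{(1+c)r} ≥ (E/2)·(c·r)
  have hrr : r ≤ (1 + c) * r := by nlinarith
  have hsplit := intervalIntegral.integral_add_adjacent_intervals
    (integrand_intInt α R hR 0 r) (integrand_intInt α R hR r ((1 + c) * r))
  have htail : E / 2 * (c * r) ≤ ∫ s in r..((1 + c) * r), psiE α R s * gEb α R s := by
    have := intervalIntegral.integral_mono_on hrr (intervalIntegrable_const)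
      (integrand_intInt α R hR r ((1 + c) * r))
      (fun s hs => hlbfun s (hr.trans hs.1))
    rw [intervalIntegral.integral_const] at this
    calc E / 2 * (c * r) = ((1 + c) * r - r) • (E / 2) := by ring_nf
    _ ≤ _ := this
  have hB : fEb α R r + E / 2 * (c * r) ≤ fEb α R ((1 + c) * r) := by
    have : fEb α R ((1 + c) * r) = fEb α R r + ∫ s in r..((1 + c) * r), psiE α R s * gEb α R s := by
      rw [fEb, fEb, hsplit]
    linarith
  -- final arithmetic
  have hexp : 1 - c / 4 * E ≤ Real.exp (-(c / 4) * E) := by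
    have := Real.add_one_le_exp (-(c / 4) * E)
    linarith
  have hB0 : 0 ≤ fEb α R ((1 + c) * r) := by nlinarith
  have ht1 : c / 4 * E < 1 := by nlinarith
  have htnn : (0:ℝ) ≤ 1 - c / 4 * E := by nlinarith
  calc fEb α R r ≤ (1 - c / 4 * E) * fEb α R ((1 + c) * r) := by
        nlinarith [mul_le_mul_of_nonneg_left hB htnn,
          mul_le_mul_of_nonneg_left hA_le (by positivity : (0:ℝ) ≤ c / 4 * E),
          mul_nonneg (mul_nonneg hc.le hE0.le) hr,
          mul_le_mul_of_nonneg_left hsmall (by positivity : (0:ℝ) ≤ c * E * r)]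
  _ ≤ Real.exp (-(c / 4) * E) * fEb α R ((1 + c) * r) := by nlinarith
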